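/- arXiv:1608.07490 — 3 statements merged into one kernel-verified Lean document; each statement's English description precedes it below -/
import Mathlib

section
/- Suppose graded series V_{g,n} satisfy the recurrence V_{g+1,n} = S·(V_{g,n+1} + 2t·V_{g,n} + t²·V_{g,n-1}) for n ≥ 1, g ≥ 0, extended by V_{g,0} = 0 and V_{g,-n} = −t^{-2n} V_{g,n}, with initial condition V_{0,n} = 1 + t³ for n > 0, where S = 1/(1-t²)². Then for all g, n ≥ 0: V_{g,n} = S^g (1+t³) Σ_{j=0}^{g+n-1} t^j (binom(2g, j) − binom(2g, j−2n)). -/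
/-- Integer binomial coefficient with the conventions of the paper:
`ibinom n k = 0` when `k < 0` or `k > n`, except `ibinom (-1) (-1) = 1`. -/
def ibinom (n k : ℤ) : ℤ :=
  if n = -1 ∧ k = -1 then 1
  else if 0 ≤ k ∧ k ≤ n then (n.toNat.choose k.toNat : ℤ)
  else 0

lemma ibinom_nat (m : ℕ) (k : ℤ) :
    ibinom m k = if 0 ≤ k ∧ k ≤ m then (m.choose k.toNat : ℤ) else 0 := by
  unfold ibinom
  rw [if_neg (by omega), Int.toNat_natCast]

lemma ibinom_of_neg {m k : ℤ} (hm : 0 ≤ m) (hk : k < 0) : ibinom m k = 0 := by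
  unfold ibinom
  rw [if_neg (by omega), if_neg (by omega)]

lemma ibinom_pascal (m : ℕ) (k : ℤ) :
    ibinom ((m : ℤ) + 1) k = ibinom (m : ℤ) k + ibinom (m : ℤ) (k - 1) := by
  rw [show ((m : ℤ) + 1) = ((m + 1 : ℕ) : ℤ) by push_cast; ring,
    ibinom_nat, ibinom_nat, ibinom_nat]
  split_ifs with hA hB hC hC hB hC hC
  · -- 1 ≤ k ≤ m
    have hk1 : 1 ≤ k := by omega
    obtain ⟨j, rfl⟩ : ∃ j : ℕ, k = (j : ℤ) + 1 := ⟨(k - 1).toNat, by omega⟩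
    have h2 : ((j : ℤ) + 1).toNat = j + 1 := by omega
    have h3 : ((j : ℤ) + 1 - 1).toNat = j := by omega
    rw [h2, h3, Nat.choose_succ_succ']
    push_cast; ring
  · -- k = 0
    have : k = 0 := by omega
    subst this
    simp
  · -- k = m + 1
    have : k = (m : ℤ) + 1 := by omega
    subst this
    have h2 : ((m : ℤ) + 1).toNat = m + 1 := by omega
    have h3 : ((m : ℤ) + 1 - 1).toNat = m := by omega
    rw [h2, h3]
    simp
  · omega
  · omega
  · omega
  · omega
  · simp

lemma ibinom_pascal₂ (m : ℕ) (k : ℤ) :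
    ibinom ((m : ℤ) + 2) k =
      ibinom (m : ℤ) k + 2 * ibinom (m : ℤ) (k - 1) + ibinom (m : ℤ) (k - 2) := by
  have h1 : ((m : ℤ) + 2) = ((m + 1 : ℕ) : ℤ) + 1 := by push_cast; ring
  rw [h1, ibinom_pascal, show ((m + 1 : ℕ) : ℤ) = (m : ℤ) + 1 by push_cast; ring,
    ibinom_pascal, ibinom_pascal, show k - 1 - 1 = k - 2 by ring]
  ring

lemma coeff_step (g n : ℕ) (hn : 1 ≤ n) (j : ℤ) :
    ibinom (2 * (g + 1 : ℕ)) j - ibinom (2 * (g + 1 : ℕ)) (j - 2 * (n : ℤ)) =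
      (ibinom (2 * g) j - ibinom (2 * g) (j - 2 * ((n + 1 : ℕ) : ℤ)))
      + 2 * (ibinom (2 * g) (j - 1) - ibinom (2 * g) (j - 1 - 2 * (n : ℤ)))
      + (ibinom (2 * g) (j - 2) - ibinom (2 * g) (j - 2 - 2 * ((n - 1 : ℕ) : ℤ))) := by
  have hcast : ((n - 1 : ℕ) : ℤ) = (n : ℤ) - 1 := by omega
  have h1 : (2 * ((g : ℤ) + 1)) = ((2 * g : ℕ) : ℤ) + 2 := by push_cast; ring
  have h2 : (2 * (g : ℤ)) = ((2 * g : ℕ) : ℤ) := by push_cast; ring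
  rw [hcast]
  push_cast
  rw [h1, h2, ibinom_pascal₂, ibinom_pascal₂]
  rw [show j - 2 * ((n:ℤ) + 1) = j - 2 - 2 * (n:ℤ) by ring,
      show j - 1 - 2 * (n:ℤ) = j - 2*(n:ℤ) - 1 by ring,
      show j - 2 - 2 * ((n:ℤ) - 1) = j - 2*(n:ℤ) by ring]
  ring

lemma sum_shift {R : Type*} [CommRing R] (T : R) (N : ℕ) (c : ℤ → ℤ) (hc : c (-1) = 0) :
    T * ∑ j ∈ Finset.range N, c j • T ^ j
      = ∑ j ∈ Finset.range (N + 1), c ((j : ℤ) - 1) • T ^ j := by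
  rw [Finset.sum_range_succ' (fun j => c ((j : ℤ) - 1) • T ^ j), Finset.mul_sum]
  simp only [Nat.cast_zero, zero_sub, hc, zero_smul, add_zero, Nat.cast_add, Nat.cast_one,
    add_sub_cancel_right]
  exact Finset.sum_congr rfl fun j _ => by rw [mul_smul_comm, ← pow_succ']

lemma sum_step {R : Type*} [CommRing R] (T : R) (g n : ℕ) (hn : 1 ≤ n) :
    ∑ j ∈ Finset.range (g + 1 + n),
        (ibinom (2 * (g + 1 : ℕ)) (j : ℤ) - ibinom (2 * (g + 1 : ℕ)) ((j : ℤ) - 2 * n)) • T ^ j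
      = ∑ j ∈ Finset.range (g + (n + 1)),
          (ibinom (2 * g) (j : ℤ) - ibinom (2 * g) ((j : ℤ) - 2 * ((n + 1 : ℕ) : ℤ))) • T ^ j
        + 2 * T * ∑ j ∈ Finset.range (g + n),
            (ibinom (2 * g) (j : ℤ) - ibinom (2 * g) ((j : ℤ) - 2 * n)) • T ^ j
        + T ^ 2 * ∑ j ∈ Finset.range (g + (n - 1)),
            (ibinom (2 * g) (j : ℤ) - ibinom (2 * g) ((j : ℤ) - 2 * ((n - 1 : ℕ) : ℤ))) • T ^ j := by
  obtain ⟨M, hM⟩ : ∃ M, g + n = M + 1 := ⟨g + n - 1, by omega⟩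
  have hr1 : g + 1 + n = M + 1 + 1 := by omega
  have hr2 : g + (n + 1) = M + 1 + 1 := by omega
  have hr3 : g + (n - 1) = M := by omega
  rw [hr1, hr2, hr3, hM]
  -- rewrite the 2*T term
  have hB : 2 * T * ∑ j ∈ Finset.range (M + 1),
      (ibinom (2 * g) (j : ℤ) - ibinom (2 * g) ((j : ℤ) - 2 * n)) • T ^ j
      = ∑ j ∈ Finset.range (M + 1 + 1),
          (2 * (ibinom (2 * g) ((j : ℤ) - 1) - ibinom (2 * g) ((j : ℤ) - 1 - 2 * n))) • T ^ j := by
    have h2 : 2 * T * ∑ j ∈ Finset.range (M + 1),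
        (ibinom (2 * g) (j : ℤ) - ibinom (2 * g) ((j : ℤ) - 2 * n)) • T ^ j
        = T * ∑ j ∈ Finset.range (M + 1),
            (2 * (ibinom (2 * g) (j : ℤ) - ibinom (2 * g) ((j : ℤ) - 2 * n))) • T ^ j := by
      rw [Finset.mul_sum, Finset.mul_sum]
      refine Finset.sum_congr rfl fun j _ => ?_
      simp only [zsmul_eq_mul]
      push_cast
      ring
    rw [h2, sum_shift T (M + 1)
      (fun k => 2 * (ibinom (2 * g) k - ibinom (2 * g) (k - 2 * n)))
      (by show 2 * (ibinom (2 * (g:ℤ)) (-1) - ibinom (2 * (g:ℤ)) (-1 - 2 * (n:ℤ))) = 0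
          rw [ibinom_of_neg (by positivity) (by omega : (-1 : ℤ) < 0),
            ibinom_of_neg (by positivity) (by omega : (-1 : ℤ) - 2 * (n : ℤ) < 0)]; ring)]
  -- rewrite the T^2 term
  have hC : T ^ 2 * ∑ j ∈ Finset.range M,
      (ibinom (2 * g) (j : ℤ) - ibinom (2 * g) ((j : ℤ) - 2 * ((n - 1 : ℕ) : ℤ))) • T ^ j
      = ∑ j ∈ Finset.range (M + 1 + 1),
          (ibinom (2 * g) ((j : ℤ) - 1 - 1)
            - ibinom (2 * g) ((j : ℤ) - 1 - 1 - 2 * ((n - 1 : ℕ) : ℤ))) • T ^ j := by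
    rw [pow_two, mul_assoc,
      sum_shift T M (fun k => ibinom (2 * g) k - ibinom (2 * g) (k - 2 * ((n - 1 : ℕ) : ℤ)))
        (by show ibinom (2 * (g:ℤ)) (-1) - ibinom (2 * (g:ℤ)) (-1 - 2 * ((n - 1 : ℕ) : ℤ)) = 0
            rw [ibinom_of_neg (by positivity) (by omega : (-1 : ℤ) < 0),
              ibinom_of_neg (by positivity) (by omega : (-1 : ℤ) - 2 * ((n - 1 : ℕ) : ℤ) < 0)]; ring),
      sum_shift T (M + 1)
        (fun k => ibinom (2 * g) (k - 1) - ibinom (2 * g) (k - 1 - 2 * ((n - 1 : ℕ) : ℤ)))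
        (by show ibinom (2 * (g:ℤ)) (-1 - 1) - ibinom (2 * (g:ℤ)) (-1 - 1 - 2 * ((n - 1 : ℕ) : ℤ)) = 0
            rw [ibinom_of_neg (by positivity) (by omega : (-1 : ℤ) - 1 < 0),
              ibinom_of_neg (by positivity) (by omega : (-1 : ℤ) - 1 - 2 * ((n - 1 : ℕ) : ℤ) < 0)]; ring)]
  rw [hB, hC, ← Finset.sum_add_distrib, ← Finset.sum_add_distrib]
  refine Finset.sum_congr rfl fun j _ => ?_
  rw [← add_smul, ← add_smul, coeff_step g n hn (j : ℤ)]
  congr 1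
  ring

/-- Solution of the `V` recurrence (Corollary 4.4): if
`V_{g+1,n} = S (V_{g,n+1} + 2t V_{g,n} + t² V_{g,n−1})` for `n ≥ 1, g ≥ 0`, extended by
`V_{g,0} = 0` and `V_{g,−n} = −t^{−2n} V_{g,n}`, with `V_{0,n} = 1 + t³` for `n > 0`,
where `S = 1/(1−t²)²`, then for all `g, n ≥ 0`:
`V_{g,n} = S^g (1+t³) Σ_{j=0}^{g+n−1} t^j (binom(2g,j) − binom(2g,j−2n))`. -/
theorem V_recurrence_solution (V : ℕ → ℤ → LaurentSeries ℚ)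
    (T S : LaurentSeries ℚ) (hT : T = HahnSeries.single 1 1)
    (hS : S = ((1 - T ^ 2) ^ 2)⁻¹)
    (hzero : ∀ g : ℕ, V g 0 = 0)
    (hneg : ∀ (g : ℕ) (n : ℕ), V g (-(n : ℤ)) = -(T ^ (-(2 * n : ℤ)) * V g n))
    (hrec : ∀ (g : ℕ) (n : ℤ), 1 ≤ n →
      V (g + 1) n = S * (V g (n + 1) + 2 * T * V g n + T ^ 2 * V g (n - 1)))
    (hinit : ∀ n : ℤ, 0 < n → V 0 n = 1 + T ^ 3) :
    ∀ (g n : ℕ),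
      V g n = S ^ g * (1 + T ^ 3) *
        ∑ j ∈ Finset.range (g + n),
          (ibinom (2 * g) j - ibinom (2 * g) ((j : ℤ) - 2 * n)) • T ^ j := by
  intro g
  induction g with
  | zero =>
    intro n
    cases n with
    | zero => simp [hzero 0]
    | succ m =>
      rw [hinit ((m + 1 : ℕ) : ℤ) (by exact_mod_cast Nat.succ_pos m)]
      have hsum : ∑ j ∈ Finset.range (0 + (m + 1)),
          (ibinom (2 * ((0:ℕ) : ℤ)) (j : ℤ)
            - ibinom (2 * ((0:ℕ) : ℤ)) ((j : ℤ) - 2 * ((m + 1 : ℕ) : ℤ))) • T ^ j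
          = 1 := by
        rw [Nat.zero_add, Finset.sum_range_succ']
        have e1 : ibinom (2 * ((0:ℕ) : ℤ)) (((0:ℕ) : ℤ)) = 1 := by simp [ibinom]
        have e2 : ibinom (2 * ((0:ℕ) : ℤ)) (((0:ℕ) : ℤ) - 2 * ((m + 1 : ℕ) : ℤ)) = 0 :=
          ibinom_of_neg (by positivity) (by omega)
        rw [e1, e2]
        have hz : ∀ j ∈ Finset.range m,
            (ibinom (2 * ((0:ℕ) : ℤ)) ((j + 1 : ℕ) : ℤ)
              - ibinom (2 * ((0:ℕ) : ℤ)) (((j + 1 : ℕ) : ℤ) - 2 * ((m + 1 : ℕ) : ℤ))) • T ^ (j + 1)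
            = 0 := by
          intro j hj
          rw [Finset.mem_range] at hj
          have e3 : ibinom (2 * ((0:ℕ) : ℤ)) ((j + 1 : ℕ) : ℤ) = 0 := by
            unfold ibinom
            rw [if_neg (by push_cast; omega), if_neg (by push_cast; omega)]
          have e4 : ibinom (2 * ((0:ℕ) : ℤ)) (((j + 1 : ℕ) : ℤ) - 2 * ((m + 1 : ℕ) : ℤ)) = 0 :=
            ibinom_of_neg (by positivity) (by push_cast; omega)
          rw [e3, e4]
          simp
        rw [Finset.sum_congr rfl hz]
        simp
      rw [hsum]
      simp
  | succ g ih =>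
    intro n
    cases n with
    | zero =>
      rw [Nat.cast_zero, hzero (g + 1)]
      simp
    | succ m =>
      have hcast : ((m + 1 : ℕ) : ℤ) = (m : ℤ) + 1 := by push_cast; ring
      rw [hrec g ((m + 1 : ℕ) : ℤ) (by omega),
        show ((m + 1 : ℕ) : ℤ) + 1 = ((m + 2 : ℕ) : ℤ) by push_cast; ring,
        show ((m + 1 : ℕ) : ℤ) - 1 = ((m : ℕ) : ℤ) by push_cast; ring,
        ih (m + 2), ih (m + 1), ih m,
        sum_step T g (m + 1) (by omega)]
      rw [show m + 1 + 1 = m + 2 from rfl, show m + 1 - 1 = m from rfl]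
      ring
end

section
/- Let S = 1/(1−t²)² and V_{g,1} = S^g (1+t³) Σ_{j=0}^{g} t^j (binom(2g,j) − binom(2g,j−2)). Then V_{g,1} ≡ (1+t³)(1−t²)/(1−t)^{2g} modulo t^{g+2} in the formal power series ring Q[[t]]. -/
open PowerSeries

lemma coeff_one_add_X_pow' (n m : ℕ) :
    coeff (R := ℚ) m ((1 + X) ^ n) = (n.choose m : ℚ) := by
  have h : (((1 + Polynomial.X : Polynomial ℚ) ^ n : Polynomial ℚ) : ℚ⟦X⟧) = (1 + X) ^ n := by
    push_cast; ring
  rw [← h, Polynomial.coeff_coe, Polynomial.coeff_one_add_X_pow]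

/-- With `S = 1/(1−t²)²` and
`V_{g,1} = S^g (1+t³) Σ_{j=0}^{g} t^j (binom(2g,j) − binom(2g,j−2))`, one has
`V_{g,1} ≡ (1+t³)(1−t²)/(1−t)^{2g}` modulo `t^{g+2}` in `ℚ[[t]]`. -/
theorem V_g_one_mod_t_g_two (g : ℕ) (i : ℕ) (hi : i < g + 2) :
    PowerSeries.coeff (R := ℚ) i
        ((((1 - X ^ 2 : PowerSeries ℚ) ^ 2)⁻¹) ^ g * (1 + X ^ 3) *
          ∑ j ∈ Finset.range (g + 1),
            (ibinom (2 * g) j - ibinom (2 * g) ((j : ℤ) - 2)) • X ^ j)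
      = PowerSeries.coeff (R := ℚ) i
          ((1 + X ^ 3) * (1 - X ^ 2) * ((1 - X : PowerSeries ℚ) ^ (2 * g))⁻¹) := by
  set u : ℚ⟦X⟧ := (((1 - X ^ 2 : ℚ⟦X⟧) ^ 2)⁻¹) ^ g with hu_def
  set v : ℚ⟦X⟧ := ((1 - X : ℚ⟦X⟧) ^ (2 * g))⁻¹ with hv_def
  set P : ℚ⟦X⟧ := ∑ j ∈ Finset.range (g + 1),
      (ibinom (2 * g) j - ibinom (2 * g) ((j : ℤ) - 2)) • X ^ j with hP_def
  -- u is the inverse of (1-X^2)^(2g)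
  have hu : u * (1 - X ^ 2 : ℚ⟦X⟧) ^ (2 * g) = 1 := by
    rw [hu_def, pow_mul, ← mul_pow,
      PowerSeries.inv_mul_cancel _ (by simp), one_pow]
  have hv : (1 - X : ℚ⟦X⟧) ^ (2 * g) * v = 1 := by
    rw [hv_def]
    exact PowerSeries.mul_inv_cancel _ (by simp)
  have hfact : ((1 : ℚ⟦X⟧) - X ^ 2) ^ (2 * g) = (1 - X) ^ (2 * g) * (1 + X) ^ (2 * g) := by
    rw [← mul_pow]; ring_nf
  have key : u * (1 + X) ^ (2 * g) = v := by
    have h1 : (u * (1 + X) ^ (2 * g)) * (1 - X) ^ (2 * g) = 1 := by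
      rw [mul_assoc, ← mul_comm ((1 - X : ℚ⟦X⟧) ^ (2*g)), ← hfact, hu]
    calc u * (1 + X) ^ (2 * g)
        = (u * (1 + X) ^ (2 * g)) * ((1 - X) ^ (2 * g) * v) := by rw [hv, mul_one]
      _ = v := by rw [← mul_assoc, h1, one_mul]
  -- divisibility of the error term
  have hdvd : (X : ℚ⟦X⟧) ^ (g + 2) ∣ P - (1 - X ^ 2) * (1 + X) ^ (2 * g) := by
    rw [X_pow_dvd_iff]
    intro m hm
    have hPc : coeff (R := ℚ) m P =
        if m ≤ g then ((ibinom (2 * g) m - ibinom (2 * g) ((m : ℤ) - 2) : ℤ) : ℚ) else 0 := by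
      rw [hP_def, map_sum]
      simp only [map_zsmul, coeff_X_pow, smul_ite, smul_zero]
      rw [Finset.sum_ite_eq (Finset.range (g + 1)) m]
      simp [Finset.mem_range, Nat.lt_succ_iff, zsmul_eq_mul, mul_one]
    have hRc : coeff (R := ℚ) m ((1 - X ^ 2 : ℚ⟦X⟧) * (1 + X) ^ (2 * g)) =
        ((2 * g).choose m : ℚ) - if 2 ≤ m then (((2 * g).choose (m - 2) : ℚ)) else 0 := by
      have : ((1 : ℚ⟦X⟧) - X ^ 2) * (1 + X) ^ (2 * g)
          = (1 + X) ^ (2 * g) - X ^ 2 * (1 + X) ^ (2 * g) := by ring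
      rw [this, map_sub, coeff_one_add_X_pow', coeff_X_pow_mul']
      split <;> simp [coeff_one_add_X_pow']
    rw [map_sub, hPc, hRc]
    -- now pure arithmetic
    simp only [ibinom]
    have h2g : ¬ ((2 * g : ℤ) = -1) := by omega
    by_cases hmg : m ≤ g
    · rw [if_pos hmg]
      have e1 : (if (2 * g : ℤ) = -1 ∧ (m : ℤ) = -1 then (1:ℤ)
          else if 0 ≤ (m:ℤ) ∧ (m:ℤ) ≤ 2 * g then ((2*g:ℤ).toNat.choose (m:ℤ).toNat : ℤ) else 0)
          = ((2*g).choose m : ℤ) := by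
        rw [if_neg (by omega), if_pos (by constructor <;> omega)]
        have hx : ((2:ℤ) * (g:ℤ)).toNat = 2 * g := by omega
        have hy : ((m:ℤ)).toNat = m := by omega
        rw [hx, hy]
      rw [e1]
      by_cases h2 : 2 ≤ m
      · rw [if_pos h2]
        have e2 : (if (2 * g : ℤ) = -1 ∧ (m : ℤ) - 2 = -1 then (1:ℤ)
            else if 0 ≤ (m:ℤ) - 2 ∧ (m:ℤ) - 2 ≤ 2 * g then ((2*g:ℤ).toNat.choose ((m:ℤ)-2).toNat : ℤ) else 0)
            = ((2*g).choose (m-2) : ℤ) := by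
          rw [if_neg (by omega), if_pos (by constructor <;> omega)]
          have hx : ((2:ℤ) * (g:ℤ)).toNat = 2 * g := by omega
          have hy : ((m:ℤ) - 2).toNat = m - 2 := by omega
          rw [hx, hy]
        rw [e2]; push_cast; ring
      · rw [if_neg h2]
        have e2 : (if (2 * g : ℤ) = -1 ∧ (m : ℤ) - 2 = -1 then (1:ℤ)
            else if 0 ≤ (m:ℤ) - 2 ∧ (m:ℤ) - 2 ≤ 2 * g then ((2*g:ℤ).toNat.choose ((m:ℤ)-2).toNat : ℤ) else 0)
            = 0 := by
          rw [if_neg (by omega), if_neg (by omega)]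
        rw [e2]; push_cast; ring
    · -- m = g + 1, g ≥ 1 or g = 0, m = 1
      have hm1 : m = g + 1 := by omega
      rw [if_neg hmg]
      rcases Nat.eq_zero_or_pos g with hg | hg
      · subst hg; subst hm1; norm_num
      · have h2 : 2 ≤ m := by omega
        rw [if_pos h2, hm1]
        have : (2 * g).choose (g + 1) = (2 * g).choose (g + 1 - 2) := by
          have := Nat.choose_symm (n := 2 * g) (k := g + 1) (by omega)
          rw [show 2 * g - (g + 1) = g + 1 - 2 by omega] at this
          omega
        rw [this]; ring
  -- conclude
  have hsub : (X : ℚ⟦X⟧) ^ (g + 2) ∣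
      (u * (1 + X ^ 3) * P - (1 + X ^ 3) * (1 - X ^ 2) * v) := by
    have heq : u * (1 + X ^ 3) * P - (1 + X ^ 3) * (1 - X ^ 2) * v
        = u * (1 + X ^ 3) * (P - (1 - X ^ 2) * (1 + X) ^ (2 * g)) := by
      rw [mul_sub, ← key]; ring
    rw [heq]
    exact Dvd.dvd.mul_left hdvd _
  rw [X_pow_dvd_iff] at hsub
  have := hsub i hi
  rw [map_sub, sub_eq_zero] at this
  exact this
end

section
/- The dimension of the degree-i, weight-k graded piece of the free graded-commutative algebra on generators p (degree 0, weight 1), ũ_j (degree 2, weight 2) for 1 ≤ j ≤ h+n−2, and exterior generators u_j (degree 1, weight 1) for 1 ≤ j ≤ h+n−1, equals binom(h+n+i−3, h+n−3) + binom(h+n+i−4, h+n−3) when i ≤ k, and 0 when i > k. -/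
lemma card_tuples (m j : ℕ) : Nat.card {P : Fin m → ℕ // ∑ x, P x = j} = (m + j - 1).choose j := by
  rw [Nat.card_congr (Sym.equivNatSumOfFintype (Fin m) j).symm, Nat.card_eq_fintype_card,
    Sym.card_sym_eq_choose, Fintype.card_fin]

lemma finite_tuples (m j : ℕ) : Finite {P : Fin m → ℕ // ∑ x, P x = j} :=
  Finite.of_equiv _ (Sym.equivNatSumOfFintype (Fin m) j)

def splitEquiv {τ : Type*} (P : τ → Bool → Prop) :
    {z : τ × Bool // P z.1 z.2} ≃ {b : τ // P b false} ⊕ {b : τ // P b true} where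
  toFun z := match z with
    | ⟨(b, false), h⟩ => .inl ⟨b, h⟩
    | ⟨(b, true), h⟩ => .inr ⟨b, h⟩
  invFun w := match w with
    | .inl ⟨b, h⟩ => ⟨(b, false), h⟩
    | .inr ⟨b, h⟩ => ⟨(b, true), h⟩
  left_inv := by rintro ⟨⟨b, (_|_)⟩, h⟩ <;> rfl
  right_inv := by rintro (⟨b, h⟩ | ⟨b, h⟩) <;> rfl

/-- parity bijection -/
def parityEquiv (m i : ℕ) :
    {y : (Fin m → ℕ) × (Fin (m+1) → Bool) //
      (2 * ∑ j, y.1 j) + (∑ j, if y.2 j then 1 else 0) = i}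
    ≃ {z : (Fin m → ℕ) × Bool // (∑ j, z.1 j) + (if z.2 then 1 else 0) = i} where
  toFun y := ⟨(fun j => 2 * y.1.1 j + (if y.1.2 j.castSucc then 1 else 0), y.1.2 (Fin.last m)), by
    obtain ⟨⟨a, s⟩, hy⟩ := y
    replace hy : (2 * ∑ j, a j) + (∑ j, if s j then 1 else 0) = i := hy
    show (∑ j, (2 * a j + (if s j.castSucc = true then 1 else 0)))
      + (if s (Fin.last m) = true then 1 else 0) = i
    rw [Fin.sum_univ_castSucc] at hy
    rw [Finset.sum_add_distrib, ← Finset.mul_sum]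
    split_ifs at * <;> omega⟩
  invFun z := ⟨(fun j => z.1.1 j / 2,
      Fin.snoc (fun j => decide (z.1.1 j % 2 = 1)) z.1.2), by
    obtain ⟨⟨b, ε⟩, hz⟩ := z
    replace hz : (∑ j, b j) + (if ε then 1 else 0) = i := hz
    show (2 * ∑ j, b j / 2)
      + (∑ j, if (Fin.snoc (fun j => decide (b j % 2 = 1)) ε : Fin (m+1) → Bool) j = true
          then 1 else 0) = i
    rw [Fin.sum_univ_castSucc]
    simp only [Fin.snoc_castSucc, Fin.snoc_last, decide_eq_true_eq]
    have hsum : (∑ j, 2 * (b j / 2)) + (∑ j, if b j % 2 = 1 then 1 else 0) = ∑ j, b j := by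
      rw [← Finset.sum_add_distrib]
      exact Finset.sum_congr rfl fun j _ => by split_ifs <;> first | omega | simp_all
    rw [Finset.mul_sum]
    split_ifs at * <;> omega⟩
  left_inv := by
    rintro ⟨⟨a, s⟩, hy⟩
    ext x
    · show (2 * a x + (if s x.castSucc = true then 1 else 0)) / 2 = a x
      split_ifs with hj <;> omega
    · show (Fin.snoc (fun j =>
          decide ((2 * a j + (if s j.castSucc = true then 1 else 0)) % 2 = 1))
          (s (Fin.last m)) : Fin (m+1) → Bool) x = s x
      refine Fin.lastCases ?_ (fun j => ?_) x
      · simp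
      · simp only [Fin.snoc_castSucc]
        rcases hs : s j.castSucc <;> simp [hs] <;> omega
  right_inv := by
    rintro ⟨⟨b, ε⟩, hz⟩
    ext x
    · show 2 * (b x / 2) + (if (Fin.snoc (fun j => decide (b j % 2 = 1)) ε :
          Fin (m+1) → Bool) x.castSucc = true then 1 else 0) = b x
      simp only [Fin.snoc_castSucc, decide_eq_true_eq]
      split_ifs with hj <;> omega
    · simp

lemma key (m i k : ℕ) :
    Nat.card {x : ℕ × (Fin m → ℕ) × (Fin (m+1) → Bool) //
        (2 * ∑ j, x.2.1 j) + (∑ j, if x.2.2 j then 1 else 0) = i ∧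
        x.1 + (2 * ∑ j, x.2.1 j) + (∑ j, if x.2.2 j then 1 else 0) = k}
      = if i ≤ k then
          (m + i - 1).choose i + (if i = 0 then 0 else (m + i - 2).choose (i-1))
        else 0 := by
  by_cases hik : i ≤ k
  · rw [if_pos hik]
    have e1 : {x : ℕ × (Fin m → ℕ) × (Fin (m+1) → Bool) //
        (2 * ∑ j, x.2.1 j) + (∑ j, if x.2.2 j then 1 else 0) = i ∧
        x.1 + (2 * ∑ j, x.2.1 j) + (∑ j, if x.2.2 j then 1 else 0) = k}
        ≃ {y : (Fin m → ℕ) × (Fin (m+1) → Bool) //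
          (2 * ∑ j, y.1 j) + (∑ j, if y.2 j then 1 else 0) = i} :=
      { toFun := fun x => ⟨x.1.2, x.2.1⟩
        invFun := fun y => ⟨(k - i, y.1), by
          obtain ⟨⟨a, s⟩, hy⟩ := y
          replace hy : (2 * ∑ j, a j) + (∑ j, if s j then 1 else 0) = i := hy
          refine ⟨hy, ?_⟩
          show k - i + (2 * ∑ j, a j) + (∑ j, if s j = true then 1 else 0) = k
          omega⟩
        left_inv := by
          rintro ⟨⟨p, a, s⟩, h1, h2⟩
          replace h1 : (2 * ∑ j, a j) + (∑ j, if s j then 1 else 0) = i := h1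
          replace h2 : p + (2 * ∑ j, a j) + (∑ j, if s j then 1 else 0) = k := h2
          have hp : p = k - i := by omega
          subst hp
          rfl
        right_inv := by rintro ⟨⟨a, s⟩, hy⟩; rfl }
    rw [Nat.card_congr ((e1.trans (parityEquiv m i)).trans
      (splitEquiv (fun (b : Fin m → ℕ) (ε : Bool) => (∑ j, b j) + (if ε then 1 else 0) = i)))]
    have hf : {b : Fin m → ℕ // (∑ j, b j) + (if false then 1 else 0) = i}
        ≃ {b : Fin m → ℕ // ∑ j, b j = i} := Equiv.subtypeEquivRight (fun b => by simp)
    haveI := finite_tuples m i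
    haveI : Finite {b : Fin m → ℕ // (∑ j, b j) + (if false then 1 else 0) = i} :=
      Finite.of_equiv _ hf.symm
    rcases Nat.eq_zero_or_pos i with hi | hi
    · subst hi
      haveI : IsEmpty {b : Fin m → ℕ // (∑ j, b j) + (if true then 1 else 0) = 0} :=
        ⟨fun x => by have := x.2; simp at this⟩
      rw [Nat.card_sum, Nat.card_congr hf, card_tuples, Nat.card_of_isEmpty]
      simp
    · have ht : {b : Fin m → ℕ // (∑ j, b j) + (if true then 1 else 0) = i}
          ≃ {b : Fin m → ℕ // ∑ j, b j = i - 1} :=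
        Equiv.subtypeEquivRight (fun b => by simp only [if_true]; omega)
      haveI := finite_tuples m (i - 1)
      haveI : Finite {b : Fin m → ℕ // (∑ j, b j) + (if true then 1 else 0) = i} :=
        Finite.of_equiv _ ht.symm
      rw [Nat.card_sum, Nat.card_congr hf, Nat.card_congr ht, card_tuples, card_tuples]
      have h1 : ¬ i = 0 := by omega
      rw [if_neg h1]
      have h2 : m + (i - 1) - 1 = m + i - 2 := by omega
      rw [h2]
  · rw [if_neg hik, Nat.card_eq_zero]
    refine Or.inl ⟨fun x => ?_⟩
    obtain ⟨⟨p, a, s⟩, h1, h2⟩ := x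
    replace h1 : (2 * ∑ j, a j) + (∑ j, if s j then 1 else 0) = i := h1
    replace h2 : p + (2 * ∑ j, a j) + (∑ j, if s j then 1 else 0) = k := h2
    omega
lemma ibinom_natCast (a b : ℕ) : ibinom a b = (a.choose b : ℤ) := by
  unfold ibinom
  rw [if_neg (by omega)]
  split_ifs with hc
  · simp
  · rw [Nat.choose_eq_zero_of_lt (by omega)]
    simp

lemma arith (m i : ℕ) :
    ((m + i - 1).choose i : ℤ) + (if i = 0 then (0:ℤ) else ((m + i - 2).choose (i-1) : ℤ))
      = ibinom ((m:ℤ) + i - 1) ((m:ℤ) - 1) + ibinom ((m:ℤ) + i - 2) ((m:ℤ) - 1) := by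
  rcases m with _ | m'
  · rcases i with _ | _ | i''
    · simp [ibinom]
    · simp [ibinom]
    · rw [Nat.choose_eq_zero_of_lt (by omega), if_neg (by omega),
        Nat.choose_eq_zero_of_lt (by omega)]
      unfold ibinom
      split_ifs <;> first | omega | simp_all
  · have e1 : ((m' + 1 : ℕ) : ℤ) + i - 1 = ((m' + i : ℕ) : ℤ) := by push_cast; omega
    have e2 : ((m' + 1 : ℕ) : ℤ) - 1 = ((m' : ℕ) : ℤ) := by push_cast; omega
    rw [e1, e2, ibinom_natCast]
    have e3 : (m' + 1 + i - 1) = m' + i := by omega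
    rw [e3]
    have e4 : (m' + i).choose m' = (m' + i).choose i := Nat.choose_symm_of_eq_add rfl
    rw [e4]
    rcases Nat.eq_zero_or_pos i with hi | hi
    · subst hi
      rw [if_pos rfl]
      unfold ibinom
      split_ifs <;> first | omega | simp_all
    · rw [if_neg (by omega)]
      have e5 : ((m' + 1 : ℕ) : ℤ) + i - 2 = ((m' + (i - 1) : ℕ) : ℤ) := by push_cast; omega
      rw [e5, ibinom_natCast]
      have e6 : m' + 1 + i - 2 = m' + (i - 1) := by omega
      rw [e6]
      have e7 : (m' + (i - 1)).choose m' = (m' + (i - 1)).choose (i - 1) :=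
        Nat.choose_symm_of_eq_add rfl
      rw [e7]

/-- Betti numbers of configuration spaces of open nonorientable surfaces: the dimension
of the degree-`i`, weight-`k` piece of the free graded-commutative algebra on `p`
(degree 0, weight 1), polynomial generators `ũ_j` (degree 2, weight 2) for
`1 ≤ j ≤ h+n−2` and exterior generators `u_j` (degree 1, weight 1) for `1 ≤ j ≤ h+n−1`
equals `binom(h+n+i−3, h+n−3) + binom(h+n+i−4, h+n−3)` when `i ≤ k`, and `0` when
`i > k`.  A basis is given by tuples of the exponent of `p`, the exponents of the `ũ_j`,
and the set of `u_j` occurring. -/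
theorem betti_open_nonorientable (h n i k : ℕ) (hh : 1 ≤ h) (hn : 1 ≤ n) :
    (Nat.card {x : ℕ × (Fin (h + n - 2) → ℕ) × (Fin (h + n - 1) → Bool) //
        (2 * ∑ j, x.2.1 j) + (∑ j, if x.2.2 j then 1 else 0) = i ∧
        x.1 + (2 * ∑ j, x.2.1 j) + (∑ j, if x.2.2 j then 1 else 0) = k} : ℤ)
      = if i ≤ k then
          ibinom ((h : ℤ) + n + i - 3) ((h : ℤ) + n - 3)
            + ibinom ((h : ℤ) + n + i - 4) ((h : ℤ) + n - 3)
        else 0 := by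
  obtain ⟨m, hm⟩ : ∃ m, h + n - 2 = m := ⟨_, rfl⟩
  have hm1 : h + n - 1 = m + 1 := by omega
  rw [hm, hm1, key m i k]
  by_cases hik : i ≤ k
  · rw [if_pos hik, if_pos hik]
    have a1 : (h : ℤ) + n + i - 3 = (m : ℤ) + i - 1 := by omega
    have a2 : (h : ℤ) + n - 3 = (m : ℤ) - 1 := by omega
    have a3 : (h : ℤ) + n + i - 4 = (m : ℤ) + i - 2 := by omega
    rw [a1, a2, a3, ← arith m i]
    push_cast [apply_ite (Nat.cast : ℕ → ℤ)]
    ring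
  · rw [if_neg hik, if_neg hik]
    norm_num
end
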